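/- Let U be an optimal prefix-free machine. Then n − H_U(n) tends to infinity as n → ∞, where n ∈ ℕ is identified with a finite binary string via the bijection sending a string s to the natural number whose binary expansion is the concatenation 1s, minus 1. -/

import Mathlib

open scoped ENNReal

/-- A set of binary strings is prefix-free: no element is a proper prefix of another. -/
def PrefixFreeSet (S : Set (List Bool)) : Prop :=
  ∀ p ∈ S, ∀ q ∈ S, p <+: q → p = q

/-- A prefix-free machine: a partial recursive function on binary strings
whose domain is a prefix-free set. -/
def PFMachine (C : List Bool →. List Bool) : Prop :=
  Partrec C ∧ PrefixFreeSet C.Dom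

/-- `Hm C s` is the length of a shortest program `p` with `C p = s` (`∞` if none). -/
noncomputable def Hm (C : List Bool →. List Bool) (s : List Bool) : ℕ∞ :=
  sInf ((fun p : List Bool => (p.length : ℕ∞)) '' {p | s ∈ C p})

/-- An optimal prefix-free machine: for every prefix-free machine `C` there is `d ∈ ℕ`
such that every `p ∈ dom C` has a `q` with `U q = C p` and `|q| ≤ |p| + d`. -/
def OptimalPFM (U : List Bool →. List Bool) : Prop :=
  PFMachine U ∧ ∀ C : List Bool →. List Bool, PFMachine C →
    ∃ d : ℕ, ∀ p s, s ∈ C p → ∃ q : List Bool, s ∈ U q ∧ q.length ≤ p.length + d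

/-- The binary string identified with `n : ℕ` via `φ(s) = (the dyadic integer 1s) − 1`. -/
def strOfNat (n : ℕ) : List Bool := ((n + 1).bits.dropLast).reverse

/- ----- auxiliary machine ----- -/

def stepC (s : Bool × List Bool) (b : Bool) : Bool × List Bool :=
  bif s.1 then (true, s.2 ++ [b]) else bif b then (false, s.2) else (true, s.2)

def decodeC (p : List Bool) : Option (List Bool) :=
  if p.length = 2 * List.idxOf false p + 1 then some (p.foldl stepC (false, [])).2 else none

def Cm : List Bool →. List Bool := fun p => (decodeC p : Part (List Bool))

def encC (s : List Bool) : List Bool := List.replicate s.length true ++ false :: s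

theorem foldl_stepC_true (acc s : List Bool) :
    s.foldl stepC (true, acc) = (true, acc ++ s) := by
  induction s generalizing acc with
  | nil => simp
  | cons b t ih => simp [stepC, ih]

theorem foldl_stepC_rep (k : ℕ) (t : List Bool) :
    ((List.replicate k true) ++ t).foldl stepC (false, []) = t.foldl stepC (false, []) := by
  induction k with
  | zero => simp
  | succ k ih => simpa [stepC, List.replicate_succ] using ih

theorem decodeC_encC (s : List Bool) : decodeC (encC s) = some s := by
  have hidx : List.idxOf false (encC s) = s.length := by
    rw [encC, List.idxOf_append_of_notMem (by simp)]
    simp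
  have hlen : (encC s).length = 2 * s.length + 1 := by simp [encC]; ring
  have hfold : (encC s).foldl stepC (false, []) = (true, s) := by
    rw [encC, foldl_stepC_rep]
    simpa [stepC] using foldl_stepC_true [] s
  simp [decodeC, hidx, hlen, hfold]

theorem primrec_decodeC : Primrec decodeC := by
  have hstep : Primrec fun x : (Bool × List Bool) × Bool => stepC x.1 x.2 := by
    unfold stepC
    exact Primrec.cond (Primrec.fst.comp .fst)
      (Primrec.pair (.const true) (Primrec.list_concat.comp (Primrec.snd.comp .fst) .snd))
      (Primrec.cond .snd (Primrec.pair (.const false) (Primrec.snd.comp .fst))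
        (Primrec.pair (.const true) (Primrec.snd.comp .fst)))
  have hidx : Primrec fun p : List Bool => List.idxOf false p :=
    Primrec.list_idxOf.comp (.const false) .id
  have hcond : PrimrecPred fun p : List Bool => p.length = 2 * List.idxOf false p + 1 :=
    Primrec.eq.comp Primrec.list_length
      (Primrec.succ.comp (Primrec.nat_mul.comp (.const 2) hidx))
  have hfold : Primrec fun p : List Bool => (p.foldl stepC (false, [])).2 :=
    Primrec.snd.comp (Primrec.list_foldl .id (.const ((false : Bool), ([] : List Bool)))
      (hstep.comp .snd).to₂)
  exact Primrec.ite hcond (Primrec.option_some.comp hfold) (.const none)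

theorem pfm_Cm : PFMachine Cm := by
  constructor
  · exact Computable.ofOption primrec_decodeC.to_comp
  · intro p hp q hq hpq
    have hdom : ∀ r : List Bool, r ∈ Cm.Dom → r.length = 2 * List.idxOf false r + 1 := by
      intro r hr
      obtain ⟨a, ha⟩ := Part.dom_iff_mem.mp hr
      rw [Cm] at ha
      rw [Part.mem_coe] at ha
      by_contra h
      simp [decodeC, h] at ha
    have hp' := hdom p hp
    have hq' := hdom q hq
    obtain ⟨r, rfl⟩ := hpq
    have hmem : false ∈ p := by
      rw [← List.idxOf_lt_length_iff]
      omega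
    rw [List.idxOf_append_of_mem hmem] at hq'
    have hr : r = [] := by
      have := List.length_append (as := p) (bs := r)
      have : r.length = 0 := by omega
      exact List.length_eq_zero_iff.mp this
    simp [hr]

theorem three_mul_le_two_pow {j : ℕ} (h : 4 ≤ j) : 3 * j ≤ 2 ^ j := by
  induction j with
  | zero => omega
  | succ j ih =>
    rcases Nat.lt_or_ge j 4 with hj | hj
    · interval_cases j <;> simp_all
    · have := ih (by omega)
      have h2 : 1 ≤ 2 ^ j := Nat.one_le_two_pow
      have : 2 ^ (j + 1) = 2 ^ j + 2 ^ j := by ring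
      omega

theorem len_strOfNat (n : ℕ) : (strOfNat n).length = Nat.size (n + 1) - 1 := by
  rw [strOfNat, List.length_reverse, List.length_dropLast, Nat.size_eq_bits_len]

/-- `n − H_U(n)` tends to infinity as `n → ∞`: for every `M` there is `n₀` such that
for all `n ≥ n₀` one has `H_U(n) + M ≤ n`, i.e. `n − H_U(n) ≥ M`. -/
theorem n_sub_H_tendsto_atTop (U : List Bool →. List Bool) (hU : OptimalPFM U) :
    ∀ M : ℕ, ∃ n₀ : ℕ, ∀ n : ℕ, n₀ ≤ n →
      Hm U (strOfNat n) + (M : ℕ∞) ≤ (n : ℕ∞) := by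
  intro M
  obtain ⟨d, hd⟩ := hU.2 Cm pfm_Cm
  set c := d + M with hc
  refine ⟨2 ^ (c + 4), fun n hn => ?_⟩
  set s := strOfNat n with hs
  have hmem : s ∈ Cm (encC s) := by
    rw [Cm, Part.mem_coe, decodeC_encC]
    rfl
  obtain ⟨q, hq, hqlen⟩ := hd (encC s) s hmem
  have hHm : Hm U s ≤ (q.length : ℕ∞) :=
    sInf_le ⟨q, hq, rfl⟩
  -- arithmetic
  set k := Nat.size (n + 1) with hk
  have hk5 : c + 5 ≤ k := by
    have : c + 4 < k := Nat.lt_size.mpr (by omega)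
    omega
  have hpow : 2 ^ (k - 1) ≤ n + 1 := Nat.lt_size.mp (by omega)
  have h3j : 3 * (k - 1) ≤ 2 ^ (k - 1) := three_mul_le_two_pow (by omega)
  have hslen : s.length = k - 1 := len_strOfNat n
  have henclen : (encC s).length = 2 * (k - 1) + 1 := by
    simp [encC, hslen]
    omega
  have hfinal : q.length + M ≤ n := by
    rw [henclen] at hqlen
    omega
  calc Hm U s + (M : ℕ∞) ≤ (q.length : ℕ∞) + (M : ℕ∞) := add_le_add_left hHm _
    _ = ((q.length + M : ℕ) : ℕ∞) := by push_cast; ring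
    _ ≤ (n : ℕ∞) := Nat.cast_le.mpr hfinal
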